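/- Let ℓ,k ∈ ℤ with ℓ ≠ 0 and ℓ dividing k(k−1). For every injective sequence of integers (x_n)_{n=1}^∞ and every finite coloring 𝔖_{ℓ,k}(x_n)_{n=1}^∞ = C_1 ∪ … ∪ C_r of the corresponding (ℓ,k)-symmetric system, there exist an injective sequence of integers (y_n)_{n=1}^∞ and a color C_i such that 𝔖_{ℓ,k}(y_n)_{n=1}^∞ ⊆ C_i. In particular, for every finite coloring ℤ = C_1 ∪ … ∪ C_r there exist an injective sequence (x_n)_{n=1}^∞ of integers and a color C_i with 𝔖_{ℓ,k}(x_n)_{n=1}^∞ ⊆ C_i. -/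

import Mathlib

/-- The value of the (ℓ,k)-symmetric polynomial 𝔖_{ℓ,k} on the family (x i)_{i ∈ F}:
𝔖_{ℓ,k} = Σ_{∅≠G⊆F} ℓ^{|G|−1} k^{|F|−|G|} ∏_{i∈G} x i + (k^{|F|} − k)/ℓ. -/
def symVal (l k : ℤ) (x : ℕ → ℤ) (F : Finset ℕ) : ℤ :=
  (∑ G ∈ F.powerset.filter (fun G => G ≠ ∅),
      l ^ (G.card - 1) * k ^ (F.card - G.card) * ∏ i ∈ G, x i)
    + (k ^ F.card - k) / l

/-- The (ℓ,k)-symmetric system of a sequence: all values 𝔖_{ℓ,k}(x_{n₁},…,x_{n_s})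
with n₁ < … < n_s. -/
def symSystem (l k : ℤ) (x : ℕ → ℤ) : Set ℤ :=
  {z : ℤ | ∃ F : Finset ℕ, F.Nonempty ∧ symVal l k x F = z}


lemma prodSucc (a : Stream' ℤ) (F : Finset ℕ) :
    ∏ i ∈ F.image (· + 1), a i = ∏ i ∈ F, a.tail i := by
  rw [Finset.prod_image (f := fun i => a i) (fun x _ y _ h => by omega)]
  rfl

lemma prodPred (a : Stream' ℤ) (F : Finset ℕ) (h0 : 0 ∉ F) :
    ∏ i ∈ F.image (· - 1), a.tail i = ∏ i ∈ F, a i := by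
  have hinj : ∀ x ∈ F, ∀ y ∈ F, x - 1 = y - 1 → x = y := by
    intro x hx y hy h
    have : x ≠ 0 := fun hh => h0 (hh ▸ hx)
    have : y ≠ 0 := fun hh => h0 (hh ▸ hy)
    omega
  rw [Finset.prod_image (f := fun i => a.tail i) hinj]
  apply Finset.prod_congr rfl
  intro i hi
  have : i ≠ 0 := fun hh => h0 (hh ▸ hi)
  show a (i - 1 + 1) = a i
  congr 1; omega

lemma FP_eq_prod {a : Stream' ℤ} {m : ℤ} (hm : m ∈ Hindman.FP a) :
    ∃ F : Finset ℕ, F.Nonempty ∧ ∏ i ∈ F, a i = m := by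
  induction hm with
  | head' a => exact ⟨{0}, ⟨0, by simp⟩, by rw [Finset.prod_singleton (f := fun i => a i)]; rfl⟩
  | tail' a m h ih =>
      obtain ⟨F, hF, hp⟩ := ih
      exact ⟨F.image (· + 1), hF.image _, by rw [prodSucc]; exact hp⟩
  | cons' a m h ih =>
      obtain ⟨F, hF, hp⟩ := ih
      refine ⟨insert 0 (F.image (· + 1)), ⟨0, by simp⟩, ?_⟩
      rw [Finset.prod_insert (f := fun i => a i) (by simp), prodSucc, hp]
      rfl

lemma prod_mem_FP (a : Stream' ℤ) (F : Finset ℕ) (hF : F.Nonempty) :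
    ∏ i ∈ F, a i ∈ Hindman.FP a := by
  obtain ⟨N, hN⟩ : ∃ N, ∀ i ∈ F, i < N := ⟨(F.max' hF) + 1, fun i hi => by
    have := F.le_max' i hi; omega⟩
  induction N generalizing F a with
  | zero => exact absurd (hN _ hF.choose_spec) (by omega)
  | succ N ih =>
      by_cases h0 : 0 ∈ F
      · by_cases he : F.erase 0 = ∅
        · have : F = {0} := by
            apply Finset.eq_singleton_iff_unique_mem.mpr
            refine ⟨h0, fun x hx => ?_⟩
            by_contra hne
            exact (Finset.ne_empty_of_mem (Finset.mem_erase.mpr ⟨hne, hx⟩)) he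
          rw [this, Finset.prod_singleton (f := fun i => a i)]; exact Hindman.FP.head a
        · have hne : (F.erase 0).Nonempty := Finset.nonempty_iff_ne_empty.mpr he
          have key : ∏ i ∈ F, a i
              = a.head * ∏ i ∈ (F.erase 0).image (· - 1), a.tail i := by
            rw [prodPred a _ (Finset.notMem_erase 0 F),
              show (a.head : ℤ) = a 0 from rfl,
              ← Finset.prod_insert (Finset.notMem_erase 0 F) (f := a),
              Finset.insert_erase h0]
          rw [key]
          apply Hindman.FP.cons
          apply ih _ _ (hne.image _)
          intro i hi
          obtain ⟨j, hj, rfl⟩ := Finset.mem_image.mp hi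
          have h1 := hN j (Finset.mem_of_mem_erase hj)
          have h2 : j ≠ 0 := (Finset.mem_erase.mp hj).1
          omega
      · rw [← prodPred a F h0]
        apply Hindman.FP.tail
        apply ih _ _ (hF.image _)
        intro i hi
        obtain ⟨j, hj, rfl⟩ := Finset.mem_image.mp hi
        have h1 := hN j hj
        have h2 : j ≠ 0 := fun hh => h0 (hh ▸ hj)
        omega

lemma dvd_pow_sub (l k : ℤ) (hdvd : l ∣ k * (k - 1)) {n : ℕ} (hn : 1 ≤ n) :
    l ∣ k ^ n - k := by
  obtain ⟨m, rfl⟩ := Nat.exists_eq_add_of_le hn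
  have h1 : (k - 1) ∣ k ^ m - 1 := by
    simpa using sub_dvd_pow_sub_pow k 1 m
  obtain ⟨c, hc⟩ := h1
  refine hdvd.trans ⟨c, ?_⟩
  have : k ^ (1 + m) - k = k * (k ^ m - 1) := by ring
  rw [this, hc]; ring

lemma key_prod (l k : ℤ) (hdvd : l ∣ k * (k - 1)) (x : ℕ → ℤ) (F : Finset ℕ)
    (hF : F.Nonempty) :
    ∏ i ∈ F, (l * x i + k) = l * symVal l k x F + k := by
  have hd : l ∣ k ^ F.card - k := dvd_pow_sub l k hdvd (Finset.card_pos.mpr hF)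
  unfold symVal
  rw [mul_add, Int.mul_ediv_cancel' hd, Finset.mul_sum, Finset.prod_add]
  rw [← Finset.sum_filter_add_sum_filter_not F.powerset (fun G => G ≠ ∅)]
  have hemp : F.powerset.filter (fun G => ¬ G ≠ ∅) = {∅} := by
    ext G
    simp only [Finset.mem_filter, Finset.mem_powerset, Finset.mem_singleton, not_not]
    exact ⟨fun h => h.2, fun h => ⟨h ▸ Finset.empty_subset F, h⟩⟩
  rw [hemp, Finset.sum_singleton]
  simp only [Finset.prod_empty, Finset.sdiff_empty, Finset.prod_const, one_mul]
  rw [add_assoc, sub_add_cancel]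
  congr 1
  apply Finset.sum_congr rfl
  intro G hG
  obtain ⟨hGF, hGne⟩ := Finset.mem_filter.mp hG
  rw [Finset.mem_powerset] at hGF
  have hc : 1 ≤ G.card := Finset.card_pos.mpr (Finset.nonempty_iff_ne_empty.mpr hGne)
  rw [Finset.card_sdiff_of_subset hGF]
  have : l ^ G.card = l * l ^ (G.card - 1) := by
    conv_lhs => rw [show G.card = (G.card - 1) + 1 by omega]
    rw [pow_succ]; ring
  rw [Finset.prod_mul_distrib, Finset.prod_const, this]; ring

lemma two_pow_card_le (c : ℕ → ℤ) (F : Finset ℕ) (h : ∀ i ∈ F, 2 ≤ c i) :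
    (2 : ℤ) ^ F.card ≤ ∏ i ∈ F, c i := by
  rw [← Finset.prod_const]
  exact Finset.prod_le_prod (fun i _ => by norm_num) h

lemma two_le_prod (c : ℕ → ℤ) (F : Finset ℕ) (hF : F.Nonempty)
    (h : ∀ i ∈ F, 2 ≤ c i) : 2 ≤ ∏ i ∈ F, c i := by
  calc (2 : ℤ) = 2 ^ 1 := (pow_one 2).symm
    _ ≤ 2 ^ F.card := pow_le_pow_right₀ (by norm_num) (Finset.card_pos.mpr hF)
    _ ≤ _ := two_pow_card_le c F h

lemma main_part1 (l k : ℤ) (hl : l ≠ 0) (hdvd : l ∣ k * (k - 1))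
    (x : ℕ → ℤ) (hx : Function.Injective x)
    (r : ℕ) (C : Fin r → Set ℤ) (hC : (⋃ i, C i) = symSystem l k x) :
    ∃ y : ℕ → ℤ, Function.Injective y ∧ ∃ i : Fin r, symSystem l k y ⊆ C i := by
  classical
  -- bad indices
  have hsub : ∀ v : ℤ, {i : ℕ | l * x i + k = v}.Subsingleton := by
    intro v i hi j hj
    exact hx (mul_left_cancel₀ hl (by
      simp only [Set.mem_setOf_eq] at hi hj; linarith))
  have hTfin : ({i : ℕ | l * x i + k = 0} ∪ {i | l * x i + k = 1}
      ∪ {i | l * x i + k = -1}).Finite :=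
    (((hsub 0).finite.union (hsub 1).finite).union (hsub (-1)).finite)
  obtain ⟨N, hN⟩ := hTfin.bddAbove
  set M := N + 1 with hM
  set x' : ℕ → ℤ := fun n => x (n + M) with hx'
  set a : Stream' ℤ := fun n => l * x' n + k with ha
  have hgood : ∀ n, 2 ≤ |a n| := by
    intro n
    have hnot : ¬ (a n = 0 ∨ a n = 1 ∨ a n = -1) := by
      intro h
      have hmem : (n + M) ∈ ({i : ℕ | l * x i + k = 0} ∪ {i | l * x i + k = 1}
          ∪ {i | l * x i + k = -1}) := by
        rcases h with h | h | h
        · exact Or.inl (Or.inl h)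
        · exact Or.inl (Or.inr h)
        · exact Or.inr h
      have := hN hmem
      omega
    push_neg at hnot
    obtain ⟨h0, h1, h2⟩ := hnot
    rcases le_or_gt 0 (a n) with h | h
    · rw [abs_of_nonneg h]; omega
    · rw [abs_of_neg h]; omega
  -- shifted symVals are in the original system
  have hshift : ∀ F : Finset ℕ, F.Nonempty → symVal l k x' F ∈ symSystem l k x := by
    intro F hF
    refine ⟨F.image (· + M), hF.image _, ?_⟩
    have h1 := key_prod l k hdvd x (F.image (· + M)) (hF.image _)
    have h2 := key_prod l k hdvd x' F hF
    have h3 : ∏ i ∈ F.image (· + M), (l * x i + k) = ∏ i ∈ F, (l * x' i + k) :=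
      Finset.prod_image (fun x _ y _ h => by omega)
    have := h3 ▸ h1
    have heq : l * symVal l k x (F.image (· + M)) + k = l * symVal l k x' F + k := by
      rw [← h1, h3, h2]
    exact (mul_left_cancel₀ hl (by linarith)).symm
  -- the cover
  set E : Fin r × Bool → Set ℤ := fun p =>
    {w | (if p.2 then 2 ≤ w else w ≤ -2) ∧ l ∣ w - k ∧ (w - k) / l ∈ C p.1} with hE
  have scov : Hindman.FP a ⊆ ⋃₀ Set.range E := by
    intro z hz
    obtain ⟨F, hF, hp⟩ := FP_eq_prod hz
    have hzval : z = l * symVal l k x' F + k := by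
      rw [← hp, ← key_prod l k hdvd x' F hF]
    have habs : 2 ≤ |z| := by
      rw [← hp, Finset.abs_prod]
      exact two_le_prod _ F hF (fun i _ => hgood i)
    obtain ⟨i, hi⟩ : ∃ i, symVal l k x' F ∈ C i := by
      have := hshift F hF
      rw [← hC] at this
      exact Set.mem_iUnion.mp this
    have hdl : l ∣ z - k := ⟨symVal l k x' F, by rw [hzval]; ring⟩
    have hq : (z - k) / l = symVal l k x' F := by
      rw [hzval, add_sub_cancel_right, Int.mul_ediv_cancel_left _ hl]
    rcases le_or_gt 0 z with h | h
    · refine ⟨E (i, true), Set.mem_range_self _, ?_⟩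
      refine ⟨by rw [abs_of_nonneg h] at habs; simpa using habs, hdl, ?_⟩
      rw [hq]; exact hi
    · refine ⟨E (i, false), Set.mem_range_self _, ?_⟩
      refine ⟨by rw [abs_of_neg h] at habs; simp; omega, hdl, ?_⟩
      rw [hq]; exact hi
  obtain ⟨c, hcs, b, hb⟩ := Hindman.FP_partition_regular a (Set.range E)
    (Set.finite_range E) scov
  obtain ⟨⟨i, pos⟩, rfl⟩ := hcs
  have hbel : ∀ n, b n ∈ E (i, pos) := by
    intro n
    have := prod_mem_FP b {n} ⟨n, Finset.mem_singleton_self n⟩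
    rw [Finset.prod_singleton (f := fun i => b i)] at this
    exact hb this
  cases pos with
  | false =>
      exfalso
      have h0 := (hbel 0).1
      have h1 := (hbel 1).1
      have h01 : b 0 * b 1 ∈ E (i, false) := by
        have := prod_mem_FP b {0, 1} ⟨0, by simp⟩
        rw [Finset.prod_pair (f := fun i => b i) (by omega)] at this
        exact hb this
      have := h01.1
      simp only [if_neg Bool.false_ne_true] at h0 h1 this
      nlinarith
  | true =>
      have hb2 : ∀ n, 2 ≤ b n := by
        intro n
        have := (hbel n).1
        simpa using this
      -- blocks
      set p : ℕ → ℕ × ℕ := fun m => Nat.rec (0, 1)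
        (fun _ q => (q.2, q.2 + (∏ i ∈ Finset.Ico q.1 q.2, b i).toNat)) m with hpdef
      set v : ℕ → ℤ := fun m => ∏ i ∈ Finset.Ico (p m).1 (p m).2, b i with hvdef
      have hp0 : p 0 = (0, 1) := rfl
      have hpsucc : ∀ m, p (m + 1) = ((p m).2, (p m).2 + (v m).toNat) := fun m => rfl
      have hpl : ∀ m, (p m).1 < (p m).2 := by
        intro m
        induction m with
        | zero => simp [hp0]
        | succ m ih =>
            have hico : (Finset.Ico (p m).1 (p m).2).Nonempty := by
              rw [Finset.nonempty_Ico]; exact ih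
            have h2 : 2 ≤ v m := two_le_prod b _ hico (fun i _ => hb2 i)
            rw [hpsucc]
            simp only
            omega
      have hvnonempty : ∀ m, (Finset.Ico (p m).1 (p m).2).Nonempty := by
        intro m; rw [Finset.nonempty_Ico]; exact hpl m
      have hv2 : ∀ m, 2 ≤ v m := fun m => two_le_prod b _ (hvnonempty m) (fun i _ => hb2 i)
      have hmono2 : Monotone (fun m => (p m).2) := by
        apply monotone_nat_of_le_succ
        intro m
        rw [hpsucc]
        simp only
        omega
      have hsep : ∀ m n, m < n → (p m).2 ≤ (p n).1 := by
        intro m n hmn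
        obtain ⟨d, rfl⟩ := Nat.exists_eq_add_of_lt hmn
        calc (p m).2 ≤ (p (m + d)).2 := hmono2 (by omega)
          _ = (p (m + d + 1)).1 := by rw [hpsucc]
      have hvmono : StrictMono v := by
        apply strictMono_nat_of_lt_succ
        intro m
        have hcard : (Finset.Ico (p (m+1)).1 (p (m+1)).2).card = (v m).toNat := by
          rw [hpsucc, Nat.card_Ico]
          simp only
          omega
        have h1 : (2 : ℤ) ^ ((v m).toNat) ≤ v (m + 1) := by
          rw [← hcard]
          exact two_pow_card_le b _ (fun i _ => hb2 i)
        have h2 : ((v m).toNat : ℤ) < 2 ^ ((v m).toNat) := by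
          exact_mod_cast (v m).toNat.lt_two_pow_self
        have h3 : v m = ((v m).toNat : ℤ) := by
          rw [Int.toNat_of_nonneg (by linarith [hv2 m])]
        calc v m = ((v m).toNat : ℤ) := h3
          _ < 2 ^ ((v m).toNat) := h2
          _ ≤ v (m + 1) := h1
      have hvFP : ∀ F : Finset ℕ, F.Nonempty → (∏ m ∈ F, v m) ∈ Hindman.FP b := by
        intro F hF
        have hdisj : (F : Set ℕ).PairwiseDisjoint
            (fun m => Finset.Ico (p m).1 (p m).2) := by
          intro m _ n _ hmn
          rcases lt_or_gt_of_ne hmn with h | h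
          · have := hsep m n h
            apply Finset.disjoint_left.mpr
            intro u hu hu'
            rw [Finset.mem_Ico] at hu hu'
            omega
          · have := hsep n m h
            apply Finset.disjoint_left.mpr
            intro u hu hu'
            rw [Finset.mem_Ico] at hu hu'
            omega
        have hprod : ∏ m ∈ F, v m
            = ∏ u ∈ F.biUnion (fun m => Finset.Ico (p m).1 (p m).2), b u :=
          (Finset.prod_biUnion hdisj).symm
        rw [hprod]
        apply prod_mem_FP
        obtain ⟨m, hm⟩ := hF
        exact ⟨(p m).1, Finset.mem_biUnion.mpr ⟨m, hm,
          Finset.mem_Ico.mpr ⟨le_refl _, hpl m⟩⟩⟩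
      have hvE : ∀ n, v n ∈ E (i, true) := by
        intro n
        have := hvFP {n} ⟨n, Finset.mem_singleton_self n⟩
        rw [Finset.prod_singleton] at this
        exact hb this
      set y : ℕ → ℤ := fun n => (v n - k) / l with hy
      have hylv : ∀ n, l * y n + k = v n := by
        intro n
        rw [hy]
        simp only
        rw [Int.mul_ediv_cancel' (hvE n).2.1, sub_add_cancel]
      refine ⟨y, ?_, i, ?_⟩
      · intro m n h
        apply hvmono.injective
        rw [← hylv m, ← hylv n, h]
      · rintro z ⟨F, hF, hzF⟩
        have hkey : ∏ j ∈ F, (l * y j + k) = l * z + k := by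
          rw [key_prod l k hdvd y F hF, hzF]
        have hprodv : ∏ j ∈ F, (l * y j + k) = ∏ j ∈ F, v j :=
          Finset.prod_congr rfl (fun j _ => hylv j)
        have hmem : l * z + k ∈ E (i, true) := by
          rw [← hkey, hprodv]
          exact hb (hvFP F hF)
        have := hmem.2.2
        rwa [add_sub_cancel_right, Int.mul_ediv_cancel_left _ hl] at this

/-- Let ℓ,k ∈ ℤ with ℓ ≠ 0 and ℓ ∣ k(k−1). For every injective sequence of
integers (xₙ) and every finite coloring of 𝔖_{ℓ,k}(xₙ), there are an injective sequence
(yₙ) and a color C i with 𝔖_{ℓ,k}(yₙ) ⊆ C i. In particular, for every finite coloring of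
ℤ there are an injective sequence (xₙ) and a color C i with 𝔖_{ℓ,k}(xₙ) ⊆ C i. -/
theorem symSystem_partition_regular (l k : ℤ) (hl : l ≠ 0) (hdvd : l ∣ k * (k - 1)) :
    (∀ x : ℕ → ℤ, Function.Injective x →
      ∀ (r : ℕ) (C : Fin r → Set ℤ), (⋃ i, C i) = symSystem l k x →
        ∃ y : ℕ → ℤ, Function.Injective y ∧ ∃ i : Fin r, symSystem l k y ⊆ C i) ∧
    (∀ (r : ℕ) (C : Fin r → Set ℤ), (⋃ i, C i) = (Set.univ : Set ℤ) →
      ∃ x : ℕ → ℤ, Function.Injective x ∧ ∃ i : Fin r, symSystem l k x ⊆ C i) := by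
  constructor
  · exact fun x hx r C hC => main_part1 l k hl hdvd x hx r C hC
  · intro r C hC
    have hcov : (⋃ i, C i ∩ symSystem l k (fun n : ℕ => (n : ℤ))) = symSystem l k (fun n : ℕ => (n : ℤ)) := by
      rw [← Set.iUnion_inter, hC, Set.univ_inter]
    obtain ⟨y, hy, i, hsub⟩ := main_part1 l k hl hdvd (fun n : ℕ => (n : ℤ)) (fun a b h => by simpa using h) r
      (fun i => C i ∩ symSystem l k (fun n : ℕ => (n : ℤ))) hcov
    exact ⟨y, hy, i, hsub.trans Set.inter_subset_left⟩
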